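/- arXiv:2401.09991 — 4 statements merged into one kernel-verified Lean document; each statement's English description precedes it below -/
import Mathlib

section
/- Define L : ℝ × (0, ∞) → ℝ by L(v, λ) = (√(1 + 4λv²) - 1)/(2λ). Then L satisfies the partial differential equation ∂_λ L = L² - v · L · ∂_v L for all v ∈ ℝ and λ > 0, and lim_{λ → 0⁺} L(v, λ) = v². -/
open Real Filter

/-- The TT̄-deformed BMS free scalar Lagrangian `L(v,λ) = (√(1+4λv²) - 1)/(2λ)` satisfies
the flow equation `∂_λ L = L² - v L ∂_v L` for all `v` and `λ > 0`, and
`L(v,λ) → v²` as `λ → 0⁺`. -/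
theorem ttbar_scalar_flow_equation :
    let L : ℝ → ℝ → ℝ := fun v lam => (Real.sqrt (1 + 4 * lam * v ^ 2) - 1) / (2 * lam)
    (∀ v lam : ℝ, 0 < lam →
      deriv (fun t => L v t) lam =
        (L v lam) ^ 2 - v * L v lam * deriv (fun w => L w lam) v) ∧
    (∀ v : ℝ, Tendsto (fun lam => L v lam) (nhdsWithin 0 (Set.Ioi 0)) (nhds (v ^ 2))) := by
  intro L
  constructor
  · intro v lam hlam
    have hpos : (0:ℝ) < 1 + 4 * lam * v ^ 2 := by positivity
    set s := Real.sqrt (1 + 4 * lam * v ^ 2) with hs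
    have hspos : 0 < s := Real.sqrt_pos.mpr hpos
    have hs2 : s ^ 2 = 1 + 4 * lam * v ^ 2 := Real.sq_sqrt hpos.le
    have hsne : s ≠ 0 := hspos.ne'
    have hlne : lam ≠ 0 := hlam.ne'
    -- derivative in λ
    have h1 : HasDerivAt (fun t : ℝ => 1 + 4 * t * v ^ 2) (4 * v ^ 2) lam := by
      have h : HasDerivAt (fun t : ℝ => 1 + 4 * v ^ 2 * t) (4 * v ^ 2) lam := by
        simpa using ((hasDerivAt_id lam).const_mul (4 * v ^ 2 : ℝ)).const_add (1 : ℝ)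
      exact h.congr_of_eventuallyEq (Eventually.of_forall fun t => by ring)
    have h2 : HasDerivAt (fun t : ℝ => Real.sqrt (1 + 4 * t * v ^ 2))
        (4 * v ^ 2 / (2 * s)) lam := h1.sqrt hpos.ne'
    have h3 : HasDerivAt (fun t : ℝ => 2 * t) (2 : ℝ) lam := by
      simpa using (hasDerivAt_id lam).const_mul (2 : ℝ)
    have h4 : HasDerivAt (fun t : ℝ => L v t)
        ((4 * v ^ 2 / (2 * s) * (2 * lam) - (s - 1) * 2) / (2 * lam) ^ 2) lam :=
      (h2.sub_const 1).div h3 (by positivity)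
    -- derivative in v
    have h5 : HasDerivAt (fun w : ℝ => 1 + 4 * lam * w ^ 2) (8 * lam * v) v := by
      have h := ((hasDerivAt_pow 2 v).const_mul (4 * lam : ℝ)).const_add (1 : ℝ)
      simpa using h.congr_deriv (by ring)
    have h6 : HasDerivAt (fun w : ℝ => L w lam)
        (8 * lam * v / (2 * s) / (2 * lam)) v :=
      ((h5.sqrt hpos.ne').sub_const 1).div_const (2 * lam)
    rw [h4.deriv, h6.deriv]
    show _ = ((s - 1) / (2 * lam)) ^ 2 - v * ((s - 1) / (2 * lam)) * _
    field_simp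
    linear_combination (-2 * s) * hs2
  · intro v
    have hcong : ∀ lam ∈ Set.Ioi (0:ℝ),
        L v lam = 2 * v ^ 2 / (Real.sqrt (1 + 4 * lam * v ^ 2) + 1) := by
      intro lam hlam
      have hlam : (0:ℝ) < lam := hlam
      have hpos : (0:ℝ) < 1 + 4 * lam * v ^ 2 := by positivity
      set s := Real.sqrt (1 + 4 * lam * v ^ 2) with hs
      have hspos : 0 < s := Real.sqrt_pos.mpr hpos
      have hs2 : s ^ 2 = 1 + 4 * lam * v ^ 2 := Real.sq_sqrt hpos.le
      show (s - 1) / (2 * lam) = 2 * v ^ 2 / (s + 1)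
      rw [div_eq_div_iff (by positivity) (by positivity)]
      nlinarith [hs2]
    have hsq : Tendsto (fun lam : ℝ => Real.sqrt (1 + 4 * lam * v ^ 2))
        (nhdsWithin 0 (Set.Ioi 0)) (nhds 1) := by
      have hc : ContinuousAt (fun lam : ℝ => Real.sqrt (1 + 4 * lam * v ^ 2)) 0 := by
        apply Real.continuous_sqrt.continuousAt.comp
        fun_prop
      have h := (hc.continuousWithinAt (s := Set.Ioi (0:ℝ))).tendsto
      simpa using h
    have htend : Tendsto (fun lam : ℝ => 2 * v ^ 2 / (Real.sqrt (1 + 4 * lam * v ^ 2) + 1))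
        (nhdsWithin 0 (Set.Ioi 0)) (nhds (v ^ 2)) := by
      have h : Tendsto (fun lam : ℝ => 2 * v ^ 2 / (Real.sqrt (1 + 4 * lam * v ^ 2) + 1))
          (nhdsWithin 0 (Set.Ioi 0)) (nhds (2 * v ^ 2 / (1 + 1))) :=
        tendsto_const_nhds.div (hsq.add tendsto_const_nhds) (by norm_num)
      have he : (2 * v ^ 2 / (1 + 1) : ℝ) = v ^ 2 := by ring
      rwa [he] at h
    exact htend.congr' (eventuallyEq_of_mem self_mem_nhdsWithin
      (fun lam hlam => (hcong lam hlam).symm))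
end

section
/- Define L : ℝ × (0, ∞) → ℝ on the region 4λv < 1 by L(v, λ) = (1 - 2λv - √(1 - 4λv))/(2λ²). Then L satisfies the partial differential equation ∂_λ L = L · ∂_v L on this region, and lim_{λ → 0⁺} L(v, λ) = v². -/
open Real Filter

/-- The JT_μ-deformed BMS free scalar Lagrangian `L(v,λ) = (1 - 2λv - √(1-4λv))/(2λ²)`
satisfies the flow equation `∂_λ L = L ∂_v L` on the region `λ > 0`, `4λv < 1`, and
`L(v,λ) → v²` as `λ → 0⁺`. -/
theorem jt_scalar_flow_equation :
    let L : ℝ → ℝ → ℝ := fun v lam =>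
      (1 - 2 * lam * v - Real.sqrt (1 - 4 * lam * v)) / (2 * lam ^ 2)
    (∀ v lam : ℝ, 0 < lam → 4 * lam * v < 1 →
      deriv (fun t => L v t) lam = L v lam * deriv (fun w => L w lam) v) ∧
    (∀ v : ℝ, Tendsto (fun lam => L v lam) (nhdsWithin 0 (Set.Ioi 0)) (nhds (v ^ 2))) := by
  intro L
  constructor
  · intro v lam hlam hreg
    have harg : (0:ℝ) < 1 - 4 * lam * v := by linarith
    set s := Real.sqrt (1 - 4 * lam * v) with hs
    have hspos : 0 < s := Real.sqrt_pos.mpr harg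
    have hs2 : s ^ 2 = 1 - 4 * lam * v := Real.sq_sqrt harg.le
    have hlne : lam ≠ 0 := ne_of_gt hlam
    have hsne : s ≠ 0 := ne_of_gt hspos
    -- derivative in lam
    have hd1 : HasDerivAt (fun t : ℝ => 1 - 4 * t * v) (-(4 * v)) lam := by
      simpa using ((hasDerivAt_id lam).const_mul 4 |>.mul_const v).const_sub 1
    have hd2 : HasDerivAt (fun t : ℝ => Real.sqrt (1 - 4 * t * v))
        (-(4 * v) / (2 * s)) lam := hd1.sqrt (ne_of_gt harg)
    have hdN : HasDerivAt (fun t : ℝ => 1 - 2 * t * v - Real.sqrt (1 - 4 * t * v))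
        (-(2 * v) - -(4 * v) / (2 * s)) lam := by
      have h3 : HasDerivAt (fun t : ℝ => 1 - 2 * t * v) (-(2 * v)) lam := by
        simpa using ((hasDerivAt_id lam).const_mul 2 |>.mul_const v).const_sub 1
      exact h3.sub hd2
    have hdD : HasDerivAt (fun t : ℝ => 2 * t ^ 2) (2 * (2 * lam)) lam := by
      simpa using (hasDerivAt_pow 2 lam).const_mul 2
    have hDne : 2 * lam ^ 2 ≠ 0 := by positivity
    have hdL : HasDerivAt (fun t => L v t)
        (((-(2 * v) - -(4 * v) / (2 * s)) * (2 * lam ^ 2) -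
          (1 - 2 * lam * v - s) * (2 * (2 * lam))) / (2 * lam ^ 2) ^ 2) lam := by
      exact hdN.div hdD hDne
    -- derivative in v
    have he1 : HasDerivAt (fun w : ℝ => 1 - 4 * lam * w) (-(4 * lam)) v := by
      simpa using ((hasDerivAt_id v).const_mul (4 * lam)).const_sub 1
    have he2 : HasDerivAt (fun w : ℝ => Real.sqrt (1 - 4 * lam * w))
        (-(4 * lam) / (2 * s)) v := he1.sqrt (ne_of_gt harg)
    have heN : HasDerivAt (fun w : ℝ => 1 - 2 * lam * w - Real.sqrt (1 - 4 * lam * w))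
        (-(2 * lam) - -(4 * lam) / (2 * s)) v := by
      have h3 : HasDerivAt (fun w : ℝ => 1 - 2 * lam * w) (-(2 * lam)) v := by
        simpa using ((hasDerivAt_id v).const_mul (2 * lam)).const_sub 1
      exact h3.sub he2
    have hdLv : HasDerivAt (fun w => L w lam)
        ((-(2 * lam) - -(4 * lam) / (2 * s)) / (2 * lam ^ 2)) v := heN.div_const _
    rw [hdL.deriv, hdLv.deriv]
    show _ = (1 - 2 * lam * v - s) / (2 * lam ^ 2) * _
    field_simp
    linear_combination 4 * hs2
  · intro v
    have hev : ∀ᶠ lam in nhdsWithin (0:ℝ) (Set.Ioi 0),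
        L v lam = 2 * v ^ 2 / (1 - 2 * lam * v + Real.sqrt (1 - 4 * lam * v)) := by
      have hδ : (0:ℝ) < 1 / (4 * (|v| + 1)) := by positivity
      filter_upwards [Ioo_mem_nhdsGT_of_mem (Set.mem_Ico.mpr ⟨le_refl 0, hδ⟩)] with lam hlam
      obtain ⟨h0, h1⟩ := hlam
      have hv4 : 4 * lam * v < 1 := by
        have h2 : 4 * lam * v ≤ 4 * lam * |v| := by
          have := le_abs_self v
          nlinarith
        have h3 : 4 * lam * (|v| + 1) < 1 := by
          have h4 : (0:ℝ) < 4 * (|v| + 1) := by positivity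
          calc 4 * lam * (|v| + 1) = lam * (4 * (|v| + 1)) := by ring
          _ < (1 / (4 * (|v| + 1))) * (4 * (|v| + 1)) := by
              apply mul_lt_mul_of_pos_right h1 h4
          _ = 1 := by field_simp
        nlinarith [abs_nonneg v]
      have harg : (0:ℝ) < 1 - 4 * lam * v := by linarith
      set s := Real.sqrt (1 - 4 * lam * v) with hs
      have hspos : 0 < s := Real.sqrt_pos.mpr harg
      have hs2 : s ^ 2 = 1 - 4 * lam * v := Real.sq_sqrt harg.le
      have hden : 0 < 1 - 2 * lam * v + s := by nlinarith
      show (1 - 2 * lam * v - s) / (2 * lam ^ 2) = 2 * v ^ 2 / (1 - 2 * lam * v + s)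
      have hlne : lam ≠ 0 := ne_of_gt h0
      field_simp
      nlinarith [hs2]
    refine Tendsto.congr' (hev.mono fun x hx => hx.symm) ?_
    have hc : ContinuousAt
        (fun lam : ℝ => 2 * v ^ 2 / (1 - 2 * lam * v + Real.sqrt (1 - 4 * lam * v))) 0 := by
      apply ContinuousAt.div
      · fun_prop
      · fun_prop
      · norm_num
    have := hc.tendsto.mono_left (nhdsWithin_le_nhds (s := Set.Ioi 0))
    have hval : 2 * v ^ 2 / (1 - 2 * (0:ℝ) * v + Real.sqrt (1 - 4 * 0 * v)) = v ^ 2 := by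
      norm_num
    rw [hval] at this
    exact this
end

section
/- Let n ≥ 2, let α₁, …, α_n be real numbers with Σᵢ αᵢ = 0, let (x₁, y₁), …, (x_n, y_n) be points with all xᵢ distinct, and define G = exp(-Σ_{i<j} αᵢ αⱼ (yᵢ - yⱼ)/(xᵢ - xⱼ)). Then G satisfies the global boost Ward identity Σ_{i=1}^n (xᵢ ∂_{yᵢ} + ξᵢ) G = 0 with boost charges ξᵢ = -αᵢ²/2, as well as the translation identities (Σᵢ ∂_{xᵢ}) G = 0 and (Σᵢ ∂_{yᵢ}) G = 0. -/
open Real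
open scoped BigOperators

private lemma update_hasDerivAt {n : ℕ} (y : Fin n → ℝ) (k i : Fin n) (t : ℝ) :
    HasDerivAt (fun s => Function.update y k s i) (if i = k then 1 else 0) t := by
  rcases eq_or_ne i k with h | h
  · subst h
    simpa [Function.update_self] using (hasDerivAt_id' t)
  · simpa [Function.update_of_ne h, h] using (hasDerivAt_const t (y i))

private lemma innery_hasDerivAt {n : ℕ} (α x y : Fin n → ℝ) (k : Fin n) :
    HasDerivAt
      (fun t => ∑ i, ∑ j, if i < j then
        α i * α j * (Function.update y k t i - Function.update y k t j) / (x i - x j) else 0)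
      (∑ i, ∑ j, if i < j then
        α i * α j * ((if i = k then (1:ℝ) else 0) - (if j = k then 1 else 0)) / (x i - x j) else 0)
      (y k) := by
  apply HasDerivAt.fun_sum
  intro i _
  apply HasDerivAt.fun_sum
  intro j _
  by_cases hij : i < j
  · simp only [if_pos hij]
    exact (((update_hasDerivAt y k i (y k)).sub (update_hasDerivAt y k j (y k))).const_mul
      (α i * α j)).div_const (x i - x j)
  · simp only [if_neg hij]
    exact hasDerivAt_const _ 0

private lemma innerx_hasDerivAt {n : ℕ} (α x y : Fin n → ℝ) (hx : Function.Injective x)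
    (k : Fin n) :
    HasDerivAt
      (fun t => ∑ i, ∑ j, if i < j then
        α i * α j * (y i - y j) / (Function.update x k t i - Function.update x k t j) else 0)
      (∑ i, ∑ j, if i < j then
        (0 * (x i - x j) - α i * α j * (y i - y j) *
          ((if i = k then (1:ℝ) else 0) - (if j = k then 1 else 0))) / (x i - x j) ^ 2 else 0)
      (x k) := by
  apply HasDerivAt.fun_sum
  intro i _
  apply HasDerivAt.fun_sum
  intro j _
  by_cases hij : i < j
  · simp only [if_pos hij]
    have hne : Function.update x k (x k) i - Function.update x k (x k) j ≠ 0 := by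
      simp only [Function.update_eq_self]
      exact sub_ne_zero.mpr (fun h => (hij.ne) (hx h))
    have h := (hasDerivAt_const (x k) (α i * α j * (y i - y j))).fun_div
      ((update_hasDerivAt x k i (x k)).sub (update_hasDerivAt x k j (x k))) hne
    simpa [Function.update_eq_self] using h
  · simp only [if_neg hij]
    exact hasDerivAt_const _ 0

private lemma sum_x_mul_D {n : ℕ} (α x : Fin n → ℝ) (hx : Function.Injective x) :
    ∑ k, x k * (∑ i, ∑ j, if i < j then
      α i * α j * ((if i = k then (1:ℝ) else 0) - (if j = k then 1 else 0)) / (x i - x j) else 0)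
    = ∑ i, ∑ j, (if i < j then α i * α j else 0) := by
  simp only [Finset.mul_sum]
  rw [Finset.sum_comm]
  refine Finset.sum_congr rfl fun i _ => ?_
  rw [Finset.sum_comm]
  refine Finset.sum_congr rfl fun j _ => ?_
  by_cases hij : i < j
  · simp only [if_pos hij]
    have hne : x i - x j ≠ 0 := sub_ne_zero.mpr (fun h => (hij.ne) (hx h))
    have hrw : ∀ k, x k * (α i * α j * ((if i = k then (1:ℝ) else 0) - (if j = k then 1 else 0))
        / (x i - x j)) =
        (α i * α j / (x i - x j)) * (if i = k then x k else 0)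
        - (α i * α j / (x i - x j)) * (if j = k then x k else 0) := by
      intro k; split_ifs <;> ring
    simp only [hrw]
    rw [Finset.sum_sub_distrib, ← Finset.mul_sum, ← Finset.mul_sum]
    simp only [Finset.sum_ite_eq, Finset.mem_univ, if_true]
    field_simp
  · simp [hij]

private lemma sum_D_zero {n : ℕ} (α x : Fin n → ℝ) :
    ∑ k, (∑ i, ∑ j, if i < j then
      α i * α j * ((if i = k then (1:ℝ) else 0) - (if j = k then 1 else 0)) / (x i - x j) else 0)
    = 0 := by
  rw [Finset.sum_comm]
  refine Finset.sum_eq_zero fun i _ => ?_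
  rw [Finset.sum_comm]
  refine Finset.sum_eq_zero fun j _ => ?_
  by_cases hij : i < j
  · simp only [if_pos hij]
    have hrw : ∀ k : Fin n, α i * α j * ((if i = k then (1:ℝ) else 0) - (if j = k then 1 else 0))
        / (x i - x j) =
        (α i * α j / (x i - x j)) * (if i = k then 1 else 0)
        - (α i * α j / (x i - x j)) * (if j = k then 1 else 0) := by
      intro k; split_ifs <;> ring
    simp only [hrw]
    rw [Finset.sum_sub_distrib, ← Finset.mul_sum, ← Finset.mul_sum]
    simp [Finset.sum_ite_eq]
  · simp [hij]

private lemma sum_Dx_zero {n : ℕ} (α x y : Fin n → ℝ) :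
    ∑ k, (∑ i, ∑ j, if i < j then
      (0 * (x i - x j) - α i * α j * (y i - y j) *
        ((if i = k then (1:ℝ) else 0) - (if j = k then 1 else 0))) / (x i - x j) ^ 2 else 0)
    = 0 := by
  rw [Finset.sum_comm]
  refine Finset.sum_eq_zero fun i _ => ?_
  rw [Finset.sum_comm]
  refine Finset.sum_eq_zero fun j _ => ?_
  by_cases hij : i < j
  · simp only [if_pos hij]
    have hrw : ∀ k : Fin n, (0 * (x i - x j) - α i * α j * (y i - y j) *
        ((if i = k then (1:ℝ) else 0) - (if j = k then 1 else 0))) / (x i - x j) ^ 2 =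
        (-(α i * α j * (y i - y j)) / (x i - x j) ^ 2) * (if i = k then 1 else 0)
        - (-(α i * α j * (y i - y j)) / (x i - x j) ^ 2) * (if j = k then 1 else 0) := by
      intro k; split_ifs <;> ring
    simp only [hrw]
    rw [Finset.sum_sub_distrib, ← Finset.mul_sum, ← Finset.mul_sum]
    simp [Finset.sum_ite_eq]
  · simp [hij]

private lemma T_eq {n : ℕ} (α : Fin n → ℝ) (hα : ∑ i, α i = 0) :
    ∑ i, ∑ j, (if i < j then α i * α j else (0:ℝ)) = -(∑ i, α i ^ 2) / 2 := by
  have h0 : (0:ℝ) = ∑ i, ∑ j, α i * α j := by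
    rw [← Finset.sum_mul_sum]
    rw [hα]; ring
  have hsplit : ∀ i j : Fin n, α i * α j =
      (if i < j then α i * α j else 0) + (if j < i then α i * α j else 0)
      + (if i = j then α i * α j else 0) := by
    intro i j
    rcases lt_trichotomy i j with h | h | h
    · simp [h, lt_asymm h, h.ne]
    · simp [h, lt_irrefl]
    · simp [h, lt_asymm h, h.ne']
  have h2 : ∑ i, ∑ j, (if j < i then α i * α j else (0:ℝ))
      = ∑ i, ∑ j, (if i < j then α i * α j else (0:ℝ)) := by
    rw [Finset.sum_comm]
    refine Finset.sum_congr rfl fun a _ => Finset.sum_congr rfl fun b _ => ?_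
    exact if_congr Iff.rfl (mul_comm _ _) rfl
  have h3 : ∑ i, ∑ j, (if i = j then α i * α j else (0:ℝ)) = ∑ i, α i ^ 2 := by
    refine Finset.sum_congr rfl fun i _ => ?_
    simp [Finset.sum_ite_eq, sq]
  have h1 : ∑ i, ∑ j, α i * α j =
      (∑ i, ∑ j, (if i < j then α i * α j else (0:ℝ)))
      + (∑ i, ∑ j, (if j < i then α i * α j else (0:ℝ)))
      + ∑ i, ∑ j, (if i = j then α i * α j else (0:ℝ)) := by
    rw [← Finset.sum_add_distrib, ← Finset.sum_add_distrib]
    refine Finset.sum_congr rfl fun i _ => ?_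
    rw [← Finset.sum_add_distrib, ← Finset.sum_add_distrib]
    exact Finset.sum_congr rfl fun j _ => hsplit i j
  rw [h1, h2, h3] at h0
  linarith

/-- The `n`-point correlator of BMS vertex operators,
`G = exp(-Σ_{i<j} αᵢαⱼ(yᵢ-yⱼ)/(xᵢ-xⱼ))` with `Σᵢ αᵢ = 0` and distinct `xᵢ`,
satisfies the global boost Ward identity `Σᵢ (xᵢ ∂_{yᵢ} + ξᵢ) G = 0` with
`ξᵢ = -αᵢ²/2`, and the translation identities `Σᵢ ∂_{xᵢ} G = 0`, `Σᵢ ∂_{yᵢ} G = 0`. -/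
theorem bms_vertex_correlator_ward (n : ℕ) (hn : 2 ≤ n) (α : Fin n → ℝ)
    (hα : ∑ i, α i = 0) (x y : Fin n → ℝ) (hx : Function.Injective x) :
    let G : (Fin n → ℝ) → (Fin n → ℝ) → ℝ := fun x' y' =>
      Real.exp (-∑ i, ∑ j, if i < j then α i * α j * (y' i - y' j) / (x' i - x' j) else 0)
    (∑ i, (x i * deriv (fun t => G x (Function.update y i t)) (y i) +
        (-(α i) ^ 2 / 2) * G x y) = 0) ∧
    (∑ i, deriv (fun t => G (Function.update x i t) y) (x i) = 0) ∧
    (∑ i, deriv (fun t => G x (Function.update y i t)) (y i) = 0) := by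
  intro G
  have hderivy : ∀ k, deriv (fun t => G x (Function.update y k t)) (y k) =
      Real.exp (-∑ i, ∑ j, if i < j then α i * α j * (y i - y j) / (x i - x j) else 0) *
      (-(∑ i, ∑ j, if i < j then
        α i * α j * ((if i = k then (1:ℝ) else 0) - (if j = k then 1 else 0)) / (x i - x j)
        else 0)) := by
    intro k
    have h := ((innery_hasDerivAt α x y k).neg).exp
    simpa [G, Function.update_eq_self] using h.deriv
  have hderivx : ∀ k, deriv (fun t => G (Function.update x k t) y) (x k) =
      Real.exp (-∑ i, ∑ j, if i < j then α i * α j * (y i - y j) / (x i - x j) else 0) *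
      (-(∑ i, ∑ j, if i < j then
        (0 * (x i - x j) - α i * α j * (y i - y j) *
          ((if i = k then (1:ℝ) else 0) - (if j = k then 1 else 0))) / (x i - x j) ^ 2
        else 0)) := by
    intro k
    have h := ((innerx_hasDerivAt α x y hx k).neg).exp
    simpa [G, Function.update_eq_self] using h.deriv
  refine ⟨?_, ?_, ?_⟩
  · simp only [hderivy]
    have hfac : ∀ k, x k *
        (Real.exp (-∑ i, ∑ j, if i < j then α i * α j * (y i - y j) / (x i - x j) else 0) *
        (-(∑ i, ∑ j, if i < j then
          α i * α j * ((if i = k then (1:ℝ) else 0) - (if j = k then 1 else 0)) / (x i - x j)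
          else 0))) + (-(α k) ^ 2 / 2) * G x y =
        Real.exp (-∑ i, ∑ j, if i < j then α i * α j * (y i - y j) / (x i - x j) else 0) *
        (-(x k * (∑ i, ∑ j, if i < j then
          α i * α j * ((if i = k then (1:ℝ) else 0) - (if j = k then 1 else 0)) / (x i - x j)
          else 0)) + (-(α k ^ 2) / 2)) := by
      intro k; simp only [G]; ring
    rw [Finset.sum_congr rfl fun k _ => hfac k, ← Finset.mul_sum]
    have h3 : ∑ k, (-(x k * (∑ i, ∑ j, if i < j then
        α i * α j * ((if i = k then (1:ℝ) else 0) - (if j = k then 1 else 0)) / (x i - x j)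
        else 0)) + (-(α k ^ 2) / 2)) = 0 := by
      rw [Finset.sum_add_distrib]
      have ha : ∑ k, -(x k * (∑ i, ∑ j, if i < j then
          α i * α j * ((if i = k then (1:ℝ) else 0) - (if j = k then 1 else 0)) / (x i - x j)
          else 0)) = -(∑ i, ∑ j, (if i < j then α i * α j else (0:ℝ))) := by
        rw [← sum_x_mul_D α x hx]
        rw [Finset.sum_neg_distrib]
      have hb : ∑ k, (-(α k ^ 2) / 2) = -(∑ k, α k ^ 2) / 2 := by
        rw [← Finset.sum_div, Finset.sum_neg_distrib]
      rw [ha, hb, T_eq α hα]; ring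
    rw [h3, mul_zero]
  · simp only [hderivx]
    rw [← Finset.mul_sum, Finset.sum_neg_distrib, sum_Dx_zero α x y]
    simp
  · simp only [hderivy]
    rw [← Finset.mul_sum, Finset.sum_neg_distrib, sum_D_zero α x]
    simp
end

section
/- Let Δ, ξ, N be real constants, and on the region x₁ ≠ x₂ define G = N |x₁₂|^{-2Δ} exp(-2ξ y₁₂/x₁₂), where x₁₂ = x₁ - x₂, y₁₂ = y₁ - y₂. Define the first-order TT̄ correction operator D acting on functions of (x₁,y₁,x₂,y₂) by D = Σ_{(i,j) ∈ {(1,2),(2,1)}} (y_{ij}/x_{ij}) [ 2ξ²/x_{ij}² + (ξ/x_{ij})(∂_{y_i} + ∂_{y_j}) + ∂_{y_i} ∂_{y_j} ]. Then D G = -4 ξ² (y₁₂ / x₁₂³) G; in particular the first-order TT̄ correction of the BMS singlet two-point function is factorized, i.e. proportional to the undeformed two-point function times y₁₂/x₁₂³. -/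
open Real

private lemma key_deriv (K a b y : ℝ) :
    deriv (fun t => K * Real.exp (a * t + b)) y = a * K * Real.exp (a * y + b) := by
  have h : HasDerivAt (fun t => K * Real.exp (a * t + b))
      (a * K * Real.exp (a * y + b)) y := by
    have : HasDerivAt (fun t => K * Real.exp (a * t + b)) (K * (Real.exp (a * id y + b) * (a * 1))) y :=
      (((hasDerivAt_id y).const_mul a).add_const b).exp.const_mul K
    convert this using 1
    simp only [id_eq]
    ring
  exact h.deriv

set_option maxHeartbeats 1600000 in
/-- The first-order TT̄ correction operator
`D = Σ_{(i,j)∈{(1,2),(2,1)}} (y_{ij}/x_{ij})[2ξ²/x_{ij}² + (ξ/x_{ij})(∂_{y_i}+∂_{y_j}) + ∂_{y_i}∂_{y_j}]`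
applied to the BMS singlet two-point function
`G = N |x₁₂|^(-2Δ) exp (-2ξ y₁₂/x₁₂)` gives `D G = -4ξ² (y₁₂/x₁₂³) G`:
the first-order TT̄ correction is factorized. -/
theorem ttbar_first_order_two_point_factorized (Δ ξ N : ℝ) :
    let G : ℝ → ℝ → ℝ → ℝ → ℝ := fun x₁ y₁ x₂ y₂ =>
      N * |x₁ - x₂| ^ (-(2 * Δ)) * Real.exp (-2 * ξ * (y₁ - y₂) / (x₁ - x₂))
    ∀ x₁ y₁ x₂ y₂ : ℝ, x₁ ≠ x₂ →
      -- (i,j) = (1,2) term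
      ((y₁ - y₂) / (x₁ - x₂)) *
          (2 * ξ ^ 2 / (x₁ - x₂) ^ 2 * G x₁ y₁ x₂ y₂ +
            ξ / (x₁ - x₂) *
              (deriv (fun t => G x₁ t x₂ y₂) y₁ + deriv (fun t => G x₁ y₁ x₂ t) y₂) +
            deriv (fun t => deriv (fun s => G x₁ t x₂ s) y₂) y₁) +
        -- (i,j) = (2,1) term
        ((y₂ - y₁) / (x₂ - x₁)) *
          (2 * ξ ^ 2 / (x₂ - x₁) ^ 2 * G x₁ y₁ x₂ y₂ +
            ξ / (x₂ - x₁) *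
              (deriv (fun t => G x₁ y₁ x₂ t) y₂ + deriv (fun t => G x₁ t x₂ y₂) y₁) +
            deriv (fun t => deriv (fun s => G x₁ s x₂ t) y₁) y₂) =
      -4 * ξ ^ 2 * ((y₁ - y₂) / (x₁ - x₂) ^ 3) * G x₁ y₁ x₂ y₂ := by
  intro G x₁ y₁ x₂ y₂ hx
  have hX : x₁ - x₂ ≠ 0 := sub_ne_zero.mpr hx
  set M := N * |x₁ - x₂| ^ (-(2 * Δ)) with hM
  set a : ℝ := -2 * ξ / (x₁ - x₂) with ha
  have hG : ∀ t s, G x₁ t x₂ s = M * Real.exp (a * t + (-a * s)) := by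
    intro t s
    simp only [G, hM]
    congr 1
    rw [ha]
    ring
  -- ∂_{y₁}
  have dy1 : ∀ s u, deriv (fun t => G x₁ t x₂ s) u = a * G x₁ u x₂ s := by
    intro s u
    simp only [hG]
    rw [key_deriv]
    ring
  -- ∂_{y₂}
  have dy2 : ∀ t u, deriv (fun s => G x₁ t x₂ s) u = -a * G x₁ t x₂ u := by
    intro t u
    have e : (fun s => G x₁ t x₂ s) = fun s => M * Real.exp ((-a) * s + a * t) := by
      funext s
      rw [hG]
      ring_nf
    rw [e, key_deriv, hG]
    ring_nf
  -- mixed ∂_{y₁}∂_{y₂}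
  have dmix1 : deriv (fun t => deriv (fun s => G x₁ t x₂ s) y₂) y₁
      = -a * a * G x₁ y₁ x₂ y₂ := by
    have e : (fun t => deriv (fun s => G x₁ t x₂ s) y₂)
        = fun t => (-a * M) * Real.exp (a * t + (-a * y₂)) := by
      funext t
      rw [dy2, hG]
      ring
    rw [e, key_deriv, hG]
    ring
  have dmix2 : deriv (fun s => deriv (fun t => G x₁ t x₂ s) y₁) y₂
      = -a * a * G x₁ y₁ x₂ y₂ := by
    have e : (fun s => deriv (fun t => G x₁ t x₂ s) y₁)
        = fun s => (a * M) * Real.exp ((-a) * s + a * y₁) := by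
      funext s
      rw [dy1, hG]
      ring
    rw [e, key_deriv, hG]
    ring
  rw [dmix1, dmix2, dy1, dy2]
  rw [show x₂ - x₁ = -(x₁ - x₂) from by ring, ha]
  generalize G x₁ y₁ x₂ y₂ = g
  generalize hXg : x₁ - x₂ = X at hX ⊢
  field_simp
  ring
end
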